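/- arXiv:2305.14258 — 4 statements merged into one kernel-verified Lean document; each statement's English description precedes it below -/
import Mathlib

section
/- (Unified formulation.) Let p_P and p_N be probability measures on X, let θ_A, θ_B ∈ [0,1], and let p_A = θ_A·p_P + (1−θ_A)·p_N and p_B = θ_B·p_P + (1−θ_B)·p_N. Assume f : X → ℝ is measurable and the pushforward distributions of f under p_P and under p_N are both atomless. Then the contaminated 0–1 AUC risk R_AB(f) = R(f; p_A, p_B) satisfies R_AB(f) = a·R_PN(f) + (1 − a)/2, where a = θ_A − θ_B. -/
open MeasureTheory

/-- The AUC risk of score function `f` under the 0–1 loss, with positive distribution `μ`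
and negative distribution `ν`: `R(f; μ, ν) = ∫∫ 𝟙[f(x) − f(x') < 0] dμ(x) dν(x')`. -/
noncomputable def AUCRisk {X : Type*} [MeasurableSpace X] (f : X → ℝ)
    (μ ν : Measure X) : ℝ :=
  ∫ x, ∫ x', (if f x - f x' < 0 then (1 : ℝ) else 0) ∂ν ∂μ


section Helpers

open scoped ENNReal

variable {X : Type*} [MeasurableSpace X]

lemma inner_eq (f : X → ℝ) (hf : Measurable f) (ν : Measure X) (x : X) :
    ∫ x', (if f x - f x' < 0 then (1 : ℝ) else 0) ∂ν
      = (ν {x' | f x < f x'}).toReal := by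
  have hs : MeasurableSet {x' | f x < f x'} :=
    measurableSet_lt measurable_const hf
  have : (fun x' => (if f x - f x' < 0 then (1 : ℝ) else 0))
      = Set.indicator {x' | f x < f x'} (fun _ => (1:ℝ)) := by
    ext x'
    simp [Set.indicator_apply, Set.mem_setOf_eq, sub_neg]
  rw [this, integral_indicator_const (1:ℝ) hs, smul_eq_mul, mul_one]
  rfl

lemma g_meas (f : X → ℝ) (hf : Measurable f) (ν : Measure X) [IsFiniteMeasure ν] :
    Measurable (fun x => (ν {x' | f x < f x'}).toReal) := by
  have hG : Antitone (fun t : ℝ => (ν {x' | t < f x'}).toReal) := by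
    intro s t hst
    apply ENNReal.toReal_mono (measure_ne_top ν _)
    exact measure_mono (fun x' hx' => lt_of_le_of_lt hst hx')
  exact hG.measurable.comp hf

lemma g_int (f : X → ℝ) (hf : Measurable f) (μ ν : Measure X)
    [IsFiniteMeasure μ] [IsProbabilityMeasure ν] :
    Integrable (fun x => (ν {x' | f x < f x'}).toReal) μ := by
  refine (integrable_const (1:ℝ)).mono' (g_meas f hf ν).aestronglyMeasurable
    (Filter.Eventually.of_forall fun x => ?_)
  rw [Real.norm_eq_abs, abs_of_nonneg ENNReal.toReal_nonneg]
  exact ENNReal.toReal_le_of_le_ofReal zero_le_one (by simpa using prob_le_one)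

lemma auc_eq (f : X → ℝ) (hf : Measurable f) (μ ν : Measure X) :
    AUCRisk f μ ν = ∫ x, (ν {x' | f x < f x'}).toReal ∂μ := by
  unfold AUCRisk
  exact integral_congr_ae (Filter.Eventually.of_forall fun x => inner_eq f hf ν x)

lemma auc_add_left (f : X → ℝ) (hf : Measurable f) (μ₁ μ₂ ν : Measure X)
    [IsProbabilityMeasure μ₁] [IsProbabilityMeasure μ₂] [IsProbabilityMeasure ν]
    (a b : ℝ≥0∞) (ha : a ≠ ⊤) (hb : b ≠ ⊤) :
    AUCRisk f (a • μ₁ + b • μ₂) ν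
      = a.toReal * AUCRisk f μ₁ ν + b.toReal * AUCRisk f μ₂ ν := by
  rw [auc_eq f hf, auc_eq f hf, auc_eq f hf]
  rw [integral_add_measure ((g_int f hf μ₁ ν).smul_measure ha)
    ((g_int f hf μ₂ ν).smul_measure hb),
    integral_smul_measure, integral_smul_measure]
  simp [smul_eq_mul]

lemma auc_add_right (f : X → ℝ) (hf : Measurable f) (μ ν₁ ν₂ : Measure X)
    [IsProbabilityMeasure μ] [IsProbabilityMeasure ν₁] [IsProbabilityMeasure ν₂]
    (a b : ℝ≥0∞) (ha : a ≠ ⊤) (hb : b ≠ ⊤) :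
    AUCRisk f μ (a • ν₁ + b • ν₂)
      = a.toReal * AUCRisk f μ ν₁ + b.toReal * AUCRisk f μ ν₂ := by
  rw [auc_eq f hf, auc_eq f hf, auc_eq f hf]
  have hpt : ∀ x, (((a • ν₁ + b • ν₂)) {x' | f x < f x'}).toReal
      = a.toReal * (ν₁ {x' | f x < f x'}).toReal
        + b.toReal * (ν₂ {x' | f x < f x'}).toReal := by
    intro x
    rw [Measure.add_apply, Measure.smul_apply, Measure.smul_apply, smul_eq_mul,
      smul_eq_mul, ENNReal.toReal_add, ENNReal.toReal_mul, ENNReal.toReal_mul]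
    · exact ENNReal.mul_ne_top ha (measure_ne_top _ _)
    · exact ENNReal.mul_ne_top hb (measure_ne_top _ _)
  rw [integral_congr_ae (Filter.Eventually.of_forall hpt),
    integral_add ((g_int f hf μ ν₁).const_mul _) ((g_int f hf μ ν₂).const_mul _),
    integral_const_mul, integral_const_mul]

lemma auc_symm (f : X → ℝ) (hf : Measurable f) (μ ν : Measure X)
    [IsProbabilityMeasure μ] [IsProbabilityMeasure ν] [SFinite μ] [SFinite ν]
    (hν : ∀ t : ℝ, ν {x | f x = t} = 0) :
    AUCRisk f μ ν + AUCRisk f ν μ = 1 := by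
  -- swap the second
  have hswap : AUCRisk f ν μ = ∫ x, (ν {x' | f x' < f x}).toReal ∂μ := by
    unfold AUCRisk
    have hFmeas : Measurable (fun p : X × X => (if f p.1 - f p.2 < 0 then (1:ℝ) else 0)) := by
      have hs : MeasurableSet {p : X × X | f p.1 - f p.2 < 0} :=
        measurableSet_lt ((hf.comp measurable_fst).sub (hf.comp measurable_snd)) measurable_const
      exact Measurable.ite hs measurable_const measurable_const
    have hFint : Integrable (fun p : X × X => (if f p.1 - f p.2 < 0 then (1:ℝ) else 0)) (ν.prod μ) := by
      refine (integrable_const (1:ℝ)).mono' hFmeas.aestronglyMeasurable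
        (Filter.Eventually.of_forall fun p => ?_)
      split <;> simp
    rw [integral_integral_swap hFint]
    apply integral_congr_ae
    refine Filter.Eventually.of_forall fun x => ?_
    have hs : MeasurableSet {x' | f x' < f x} :=
      measurableSet_lt hf measurable_const
    show ∫ x', (if f x' - f x < 0 then (1 : ℝ) else 0) ∂ν = (ν {x' | f x' < f x}).toReal
    have : (fun x' => (if f x' - f x < 0 then (1 : ℝ) else 0))
        = Set.indicator {x' | f x' < f x} (fun _ => (1:ℝ)) := by
      ext x'
      simp [Set.indicator_apply, Set.mem_setOf_eq, sub_neg]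
    rw [this, integral_indicator_const (1:ℝ) hs, smul_eq_mul, mul_one]
    rfl
  rw [auc_eq f hf, hswap,
    ← integral_add (g_int f hf μ ν) ?_]
  · have hpt : ∀ x, (ν {x' | f x < f x'}).toReal + (ν {x' | f x' < f x}).toReal = 1 := by
      intro x
      have hA : MeasurableSet {x' | f x < f x'} := measurableSet_lt measurable_const hf
      have hB : MeasurableSet {x' | f x' < f x} := measurableSet_lt hf measurable_const
      have hdisj : Disjoint {x' | f x < f x'} {x' | f x' < f x} := by
        rw [Set.disjoint_left]
        intro x' h1 h2
        simp only [Set.mem_setOf_eq] at h1 h2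
        exact lt_asymm h1 h2
      have hcompl : ({x' | f x < f x'} ∪ {x' | f x' < f x})ᶜ = {x' | f x' = f x} := by
        ext x'
        simp [Set.mem_compl_iff, Set.mem_union, Set.mem_setOf_eq, not_or, not_lt,
          le_antisymm_iff, eq_comm, and_comm]
      have hU : ν ({x' | f x < f x'} ∪ {x' | f x' < f x}) = 1 := by
        have h0 : ν (({x' | f x < f x'} ∪ {x' | f x' < f x})ᶜ) = 0 := by
          rw [hcompl]; exact hν (f x)
        have := measure_add_measure_compl (μ := ν) (hA.union hB)
        rw [h0, add_zero] at this
        simpa using this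
      rw [← ENNReal.toReal_add (measure_ne_top _ _) (measure_ne_top _ _),
        ← measure_union hdisj hB, hU, ENNReal.toReal_one]
    rw [integral_congr_ae (Filter.Eventually.of_forall hpt)]
    simp
  · -- Integrable (fun x => (ν {x' | f x' < f x}).toReal) μ
    have hG : Monotone (fun t : ℝ => (ν {x' | f x' < t}).toReal) := by
      intro s t hst
      apply ENNReal.toReal_mono (measure_ne_top ν _)
      exact measure_mono (fun x' hx' => lt_of_lt_of_le hx' hst)
    refine (integrable_const (1:ℝ)).mono' ((hG.measurable.comp hf).aestronglyMeasurable)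
      (Filter.Eventually.of_forall fun x => ?_)
    rw [Real.norm_eq_abs, abs_of_nonneg ENNReal.toReal_nonneg]
    exact ENNReal.toReal_le_of_le_ofReal zero_le_one (by simpa using prob_le_one)

lemma auc_self (f : X → ℝ) (hf : Measurable f) (μ : Measure X)
    [IsProbabilityMeasure μ] (hμ : ∀ t : ℝ, μ {x | f x = t} = 0) :
    AUCRisk f μ μ = 1 / 2 := by
  have := auc_symm f hf μ μ hμ
  linarith

lemma mix_prob (μ ν : Measure X) [IsProbabilityMeasure μ] [IsProbabilityMeasure ν]
    (θ : ℝ) (hθ : θ ∈ Set.Icc (0:ℝ) 1) :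
    IsProbabilityMeasure (ENNReal.ofReal θ • μ + ENNReal.ofReal (1 - θ) • ν) := by
  constructor
  rw [Measure.add_apply, Measure.smul_apply, Measure.smul_apply, measure_univ, measure_univ,
    smul_eq_mul, smul_eq_mul, mul_one, mul_one, ← ENNReal.ofReal_add hθ.1 (by linarith [hθ.2]),
    show θ + (1 - θ) = 1 by ring, ENNReal.ofReal_one]


end Helpers

/-- unified formulation: the contaminated 0–1 AUC risk satisfies
`R_AB(f) = a·R_PN(f) + (1 − a)/2` with `a = θ_A − θ_B`. -/
theorem contaminated_auc_risk_affine {X : Type*} [MeasurableSpace X]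
    (pP pN : Measure X) [IsProbabilityMeasure pP] [IsProbabilityMeasure pN]
    (θA θB : ℝ) (hθA : θA ∈ Set.Icc (0 : ℝ) 1) (hθB : θB ∈ Set.Icc (0 : ℝ) 1)
    (f : X → ℝ) (hf : Measurable f)
    (hP : ∀ t : ℝ, pP {x | f x = t} = 0)
    (hN : ∀ t : ℝ, pN {x | f x = t} = 0)
    (pA pB : Measure X)
    (hpA : pA = ENNReal.ofReal θA • pP + ENNReal.ofReal (1 - θA) • pN)
    (hpB : pB = ENNReal.ofReal θB • pP + ENNReal.ofReal (1 - θB) • pN) :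
    AUCRisk f pA pB
      = (θA - θB) * AUCRisk f pP pN + (1 - (θA - θB)) / 2 := by

  have hA0 := hθA.1; have hA1 := hθA.2; have hB0 := hθB.1; have hB1 := hθB.2
  haveI hBp : IsProbabilityMeasure (ENNReal.ofReal θB • pP + ENNReal.ofReal (1 - θB) • pN) :=
    mix_prob pP pN θB hθB
  rw [hpA, hpB]
  rw [auc_add_left f hf pP pN _ _ _ ENNReal.ofReal_ne_top ENNReal.ofReal_ne_top,
    auc_add_right f hf pP pP pN _ _ ENNReal.ofReal_ne_top ENNReal.ofReal_ne_top,
    auc_add_right f hf pN pP pN _ _ ENNReal.ofReal_ne_top ENNReal.ofReal_ne_top,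
    ENNReal.toReal_ofReal hA0, ENNReal.toReal_ofReal hB0,
    ENNReal.toReal_ofReal (by linarith : (0:ℝ) ≤ 1 - θA),
    ENNReal.toReal_ofReal (by linarith : (0:ℝ) ≤ 1 - θB)]
  have hPP := auc_self f hf pP hP
  have hNN := auc_self f hf pN hN
  have hsym := auc_symm f hf pP pN hN
  have hNP : AUCRisk f pN pP = 1 - AUCRisk f pP pN := by linarith
  rw [hPP, hNN, hNP]
  ring
end

section
/- (Consistency of the inaccurate case.) Let p_P and p_N be probability measures on X, let θ_A, θ_B ∈ [0,1] with θ_A > θ_B, and let p_A = θ_A·p_P + (1−θ_A)·p_N and p_B = θ_B·p_P + (1−θ_B)·p_N. Let F be a set of measurable score functions such that for every f ∈ F the pushforward distributions of f under p_P and under p_N are atomless. If f* ∈ F minimizes the contaminated risk R_AB over F, i.e., R(f*; p_A, p_B) ≤ R(f; p_A, p_B) for all f ∈ F, then f* also minimizes the true AUC risk over F: R_PN(f*) ≤ R_PN(f) for all f ∈ F. -/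
open MeasureTheory
open scoped ENNReal

section aux

variable {X : Type*} [MeasurableSpace X]

private lemma ltSet_measurable {f : X → ℝ} (hf : Measurable f) :
    MeasurableSet {p : X × X | f p.1 < f p.2} :=
  measurableSet_lt (hf.comp measurable_fst) (hf.comp measurable_snd)

private lemma auc_eq_toReal {f : X → ℝ} (hf : Measurable f) (μ ν : Measure X)
    [IsFiniteMeasure μ] [IsFiniteMeasure ν] :
    AUCRisk f μ ν = ((μ.prod ν) {p : X × X | f p.1 < f p.2}).toReal := by
  have hS := ltSet_measurable hf
  have hsec : ∀ x : X, MeasurableSet {x' | f x < f x'} := fun x =>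
    measurableSet_lt measurable_const hf
  have hinner : ∀ x : X, (∫ x', (if f x - f x' < 0 then (1:ℝ) else 0) ∂ν)
      = (ν {x' | f x < f x'}).toReal := by
    intro x
    have heq : (fun x' => if f x - f x' < 0 then (1:ℝ) else 0)
        = Set.indicator {x' | f x < f x'} (fun _ => (1:ℝ)) := by
      ext x'
      by_cases h : f x < f x' <;> simp [Set.indicator, sub_neg, h]
    rw [heq, integral_indicator_const _ (hsec x)]
    simp
    rfl
  unfold AUCRisk
  simp_rw [hinner]
  rw [Measure.prod_apply hS]
  have hmeasfun : Measurable fun x => ν (Prod.mk x ⁻¹' {p : X × X | f p.1 < f p.2}) :=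
    measurable_measure_prodMk_left hS
  rw [integral_toReal (f := fun x => ν {x' | f x < f x'})
    (by exact hmeasfun.aemeasurable)
    (Filter.Eventually.of_forall fun x => measure_lt_top ν _)]
  rfl

private lemma ties_zero {f : X → ℝ} (hf : Measurable f) (μ ν : Measure X) [SFinite ν]
    (hν : ∀ t, ν {x | f x = t} = 0) :
    (μ.prod ν) {p : X × X | f p.1 = f p.2} = 0 := by
  have hS : MeasurableSet {p : X × X | f p.1 = f p.2} :=
    measurableSet_eq_fun (hf.comp measurable_fst) (hf.comp measurable_snd)
  rw [Measure.prod_apply hS]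
  have h0 : ∀ x, ν (Prod.mk x ⁻¹' {p : X × X | f p.1 = f p.2}) = 0 := by
    intro x
    have : Prod.mk x ⁻¹' {p : X × X | f p.1 = f p.2} = {x' | f x' = f x} := by
      ext x'; simp [eq_comm]
    rw [this]; exact hν (f x)
  rw [lintegral_congr h0]
  simp

private lemma swap_measure {f : X → ℝ} (hf : Measurable f) (μ ν : Measure X)
    [SFinite μ] [SFinite ν] :
    (ν.prod μ) {p : X × X | f p.1 < f p.2} = (μ.prod ν) {p : X × X | f p.2 < f p.1} := by
  have hS := ltSet_measurable hf
  rw [← Measure.prod_swap, Measure.map_apply measurable_swap hS]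
  rfl

private lemma compl_union {f : X → ℝ} (hf : Measurable f) (μ ν : Measure X)
    [IsProbabilityMeasure μ] [IsProbabilityMeasure ν]
    (hν : ∀ t, ν {x | f x = t} = 0) :
    (μ.prod ν) {p : X × X | f p.1 < f p.2} + (μ.prod ν) {p : X × X | f p.2 < f p.1} = 1 := by
  have hS := ltSet_measurable hf
  have hS' : MeasurableSet {p : X × X | f p.2 < f p.1} :=
    measurableSet_lt (hf.comp measurable_snd) (hf.comp measurable_fst)
  have hdisj : Disjoint {p : X × X | f p.1 < f p.2} {p : X × X | f p.2 < f p.1} := by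
    rw [Set.disjoint_left]
    intro p h1 h2
    simp only [Set.mem_setOf_eq] at h1 h2
    exact lt_asymm h1 h2
  have hunion : {p : X × X | f p.1 < f p.2} ∪ {p : X × X | f p.2 < f p.1}
      = {p : X × X | f p.1 = f p.2}ᶜ := by
    ext p
    simp [lt_or_lt_iff_ne]
  have hD : MeasurableSet {p : X × X | f p.1 = f p.2} :=
    measurableSet_eq_fun (hf.comp measurable_fst) (hf.comp measurable_snd)
  rw [← measure_union hdisj hS', hunion, measure_compl hD (measure_ne_top _ _),
    ties_zero hf μ ν hν]
  simp

/-- AUC against itself equals ½ when there are no ties. -/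
private lemma auc_self_half {f : X → ℝ} (hf : Measurable f) (μ : Measure X)
    [IsProbabilityMeasure μ] (hμ : ∀ t, μ {x | f x = t} = 0) :
    AUCRisk f μ μ = 1 / 2 := by
  have h1 := compl_union hf μ μ hμ
  have h2 := swap_measure hf μ μ
  rw [← h2] at h1
  have hfin : (μ.prod μ) {p : X × X | f p.1 < f p.2} ≠ ⊤ := measure_ne_top _ _
  rw [auc_eq_toReal hf]
  have := congrArg ENNReal.toReal h1
  rw [ENNReal.toReal_add hfin hfin] at this
  simp at this
  linarith

private lemma auc_rev {f : X → ℝ} (hf : Measurable f) (μ ν : Measure X)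
    [IsProbabilityMeasure μ] [IsProbabilityMeasure ν]
    (hν : ∀ t, ν {x | f x = t} = 0) :
    AUCRisk f ν μ = 1 - AUCRisk f μ ν := by
  have h1 := compl_union hf μ ν hν
  have h2 := swap_measure hf μ ν
  rw [← h2] at h1
  rw [auc_eq_toReal hf, auc_eq_toReal hf]
  have := congrArg ENNReal.toReal h1
  rw [ENNReal.toReal_add (measure_ne_top _ _) (measure_ne_top _ _)] at this
  simp at this
  linarith

private lemma prod_left_mix (a a' : ℝ≥0∞) (μ1 μ2 ν : Measure X) [SFinite ν]
    {S : Set (X × X)} (hS : MeasurableSet S) :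
    ((a • μ1 + a' • μ2).prod ν) S = a * (μ1.prod ν) S + a' * (μ2.prod ν) S := by
  rw [Measure.prod_apply hS, Measure.prod_apply hS, Measure.prod_apply hS,
    lintegral_add_measure, lintegral_smul_measure, lintegral_smul_measure,
    smul_eq_mul, smul_eq_mul]

private lemma prod_right_mix (b b' : ℝ≥0∞) (μ ν1 ν2 : Measure X)
    [SFinite ν1] [SFinite ν2] [SFinite (b • ν1 + b' • ν2)]
    {S : Set (X × X)} (hS : MeasurableSet S) :
    (μ.prod (b • ν1 + b' • ν2)) S = b * (μ.prod ν1) S + b' * (μ.prod ν2) S := by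
  rw [Measure.prod_apply hS, Measure.prod_apply hS, Measure.prod_apply hS]
  have : ∀ x, (b • ν1 + b' • ν2) (Prod.mk x ⁻¹' S)
      = b * ν1 (Prod.mk x ⁻¹' S) + b' * ν2 (Prod.mk x ⁻¹' S) := by
    intro x; simp [Measure.add_apply, Measure.smul_apply]
  simp_rw [this]
  rw [lintegral_add_left ((measurable_measure_prodMk_left hS).const_mul b),
    lintegral_const_mul _ (measurable_measure_prodMk_left hS),
    lintegral_const_mul _ (measurable_measure_prodMk_left hS)]

end aux

/-- consistency of the inaccurate case: a minimizer of the contaminated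
0–1 AUC risk `R_AB` over a family `F` is also a minimizer of the true risk `R_PN`. -/
theorem contaminated_auc_minimizer_consistent {X : Type*} [MeasurableSpace X]
    (pP pN : Measure X) [IsProbabilityMeasure pP] [IsProbabilityMeasure pN]
    (θA θB : ℝ) (hθA : θA ∈ Set.Icc (0 : ℝ) 1) (hθB : θB ∈ Set.Icc (0 : ℝ) 1)
    (hab : θB < θA)
    (F : Set (X → ℝ))
    (hmeas : ∀ f ∈ F, Measurable f)
    (hP : ∀ f ∈ F, ∀ t : ℝ, pP {x | f x = t} = 0)
    (hN : ∀ f ∈ F, ∀ t : ℝ, pN {x | f x = t} = 0)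
    (pA pB : Measure X)
    (hpA : pA = ENNReal.ofReal θA • pP + ENNReal.ofReal (1 - θA) • pN)
    (hpB : pB = ENNReal.ofReal θB • pP + ENNReal.ofReal (1 - θB) • pN)
    (fstar : X → ℝ) (hstar : fstar ∈ F)
    (hmin : ∀ f ∈ F, AUCRisk fstar pA pB ≤ AUCRisk f pA pB) :
    ∀ f ∈ F, AUCRisk fstar pP pN ≤ AUCRisk f pP pN := by
  obtain ⟨hA0, hA1⟩ := hθA
  obtain ⟨hB0, hB1⟩ := hθB
  have hA1' : (0:ℝ) ≤ 1 - θA := by linarith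
  have hB1' : (0:ℝ) ≤ 1 - θB := by linarith
  haveI hpAprob : IsProbabilityMeasure pA := by
    constructor
    rw [hpA]
    simp [Measure.add_apply, Measure.smul_apply]
    rw [← ENNReal.ofReal_add hA0 hA1']
    norm_num
  haveI hpBprob : IsProbabilityMeasure pB := by
    constructor
    rw [hpB]
    simp [Measure.add_apply, Measure.smul_apply]
    rw [← ENNReal.ofReal_add hB0 hB1']
    norm_num
  -- key expansion
  have key : ∀ g ∈ F, AUCRisk g pA pB
      = θA * θB * (1/2) + (1-θA) * (1-θB) * (1/2)
        + θA * (1-θB) * AUCRisk g pP pN + (1-θA) * θB * (1 - AUCRisk g pP pN) := by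
    intro g hg
    have hgm := hmeas g hg
    have hS := ltSet_measurable hgm
    set S := {p : X × X | g p.1 < g p.2} with hSdef
    have hexp : (pA.prod pB) S
        = ENNReal.ofReal θA * (ENNReal.ofReal θB * (pP.prod pP) S
            + ENNReal.ofReal (1-θB) * (pP.prod pN) S)
          + ENNReal.ofReal (1-θA) * (ENNReal.ofReal θB * (pN.prod pP) S
            + ENNReal.ofReal (1-θB) * (pN.prod pN) S) := by
      rw [hpA, hpB, prod_left_mix _ _ _ _ _ hS, prod_right_mix _ _ _ _ _ hS,
        prod_right_mix _ _ _ _ _ hS]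
    have hfinPP : (pP.prod pP) S ≠ ⊤ := measure_ne_top _ _
    have hfinPN : (pP.prod pN) S ≠ ⊤ := measure_ne_top _ _
    have hfinNP : (pN.prod pP) S ≠ ⊤ := measure_ne_top _ _
    have hfinNN : (pN.prod pN) S ≠ ⊤ := measure_ne_top _ _
    have hreal : AUCRisk g pA pB
        = θA * (θB * AUCRisk g pP pP + (1-θB) * AUCRisk g pP pN)
          + (1-θA) * (θB * AUCRisk g pN pP + (1-θB) * AUCRisk g pN pN) := by
      rw [auc_eq_toReal hgm pA pB, auc_eq_toReal hgm pP pP, auc_eq_toReal hgm pP pN,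
        auc_eq_toReal hgm pN pP, auc_eq_toReal hgm pN pN, ← hSdef, hexp]
      rw [ENNReal.toReal_add, ENNReal.toReal_mul, ENNReal.toReal_mul,
        ENNReal.toReal_add, ENNReal.toReal_add, ENNReal.toReal_mul, ENNReal.toReal_mul,
        ENNReal.toReal_mul, ENNReal.toReal_mul,
        ENNReal.toReal_ofReal hA0, ENNReal.toReal_ofReal hA1',
        ENNReal.toReal_ofReal hB0, ENNReal.toReal_ofReal hB1']
      all_goals
        refine ENNReal.mul_ne_top ENNReal.ofReal_ne_top ?_
        first
          | exact hfinPP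
          | exact hfinPN
          | exact hfinNP
          | exact hfinNN
          | exact ENNReal.add_ne_top.2 ⟨ENNReal.mul_ne_top ENNReal.ofReal_ne_top hfinPP,
              ENNReal.mul_ne_top ENNReal.ofReal_ne_top hfinPN⟩
          | exact ENNReal.add_ne_top.2 ⟨ENNReal.mul_ne_top ENNReal.ofReal_ne_top hfinNP,
              ENNReal.mul_ne_top ENNReal.ofReal_ne_top hfinNN⟩
    rw [hreal, auc_self_half hgm pP (hP g hg), auc_self_half hgm pN (hN g hg),
      auc_rev hgm pP pN (hN g hg)]
    ring
  intro f hf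
  have h1 := key fstar hstar
  have h2 := key f hf
  have h3 := hmin f hf
  rw [h1, h2] at h3
  nlinarith [h3]
end

section
/- (Consistency of the combined noisy semi-supervised risk.) In the setting of the noisy semi-supervised case (p_P̃ = (1−η_P)·p_P + η_P·p_N, p_Ñ = η_N·p_P + (1−η_N)·p_N, p_U = π_P·p_P + π_N·p_N with π_P + π_N = 1), let γ ∈ [0,1] and define the combined risk R_P̃ÑU(f) = γ·R(f; p_P̃, p_Ñ) + (1−γ)·(R(f; p_P̃, p_U) + R(f; p_U, p_Ñ) − 1/2). Assume f : X → ℝ is measurable and the pushforward distributions of f under p_P and under p_N are atomless. Then R_P̃ÑU(f) = ã·R_PN(f) + (1 − ã)/2 with ã = 1 − η_P − η_N; in particular R_P̃ÑU is an affine transformation of the true AUC risk with slope independent of γ. -/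
open MeasureTheory

section Aux
variable {X : Type*} [MeasurableSpace X] {f : X → ℝ}

private lemma measG (hf : Measurable f) :
    Measurable (fun p : X × X => if f p.1 - f p.2 < 0 then (1:ℝ) else 0) :=
  Measurable.ite (measurableSet_lt ((hf.comp measurable_fst).sub (hf.comp measurable_snd))
    measurable_const) measurable_const measurable_const

private lemma int_inner (hf : Measurable f) (x : X) (ν : Measure X) [IsFiniteMeasure ν] :
    Integrable (fun x' => if f x - f x' < 0 then (1:ℝ) else 0) ν := by
  refine (integrable_const (1:ℝ)).mono' ?_ ?_
  · exact (Measurable.ite (measurableSet_lt ((measurable_const).sub hf) measurable_const)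
      measurable_const measurable_const).aestronglyMeasurable
  · filter_upwards with x'
    by_cases h : f x - f x' < 0 <;> simp [h]

private lemma measg (hf : Measurable f) (ν : Measure X) [SFinite ν] :
    StronglyMeasurable (fun x => ∫ x', (if f x - f x' < 0 then (1:ℝ) else 0) ∂ν) :=
  (measG hf).stronglyMeasurable.integral_prod_right'

private lemma int_outer (hf : Measurable f) (μ ν : Measure X) [IsFiniteMeasure μ]
    [IsProbabilityMeasure ν] :
    Integrable (fun x => ∫ x', (if f x - f x' < 0 then (1:ℝ) else 0) ∂ν) μ := by
  refine (integrable_const (1:ℝ)).mono' (measg hf ν).aestronglyMeasurable ?_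
  filter_upwards with x
  rw [Real.norm_eq_abs, abs_of_nonneg (integral_nonneg fun x' => by positivity)]
  calc ∫ x', (if f x - f x' < 0 then (1:ℝ) else 0) ∂ν ≤ ∫ _x', (1:ℝ) ∂ν := by
        refine integral_mono (int_inner hf x ν) (integrable_const 1) fun x' => ?_
        by_cases h : f x - f x' < 0 <;> simp [h]
    _ = 1 := by simp

private lemma AUC_right (hf : Measurable f) (μ ν₁ ν₂ : Measure X) [IsProbabilityMeasure μ]
    [IsProbabilityMeasure ν₁] [IsProbabilityMeasure ν₂] {a b : ℝ} (ha : 0 ≤ a) (hb : 0 ≤ b) :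
    AUCRisk f μ (ENNReal.ofReal a • ν₁ + ENNReal.ofReal b • ν₂)
      = a * AUCRisk f μ ν₁ + b * AUCRisk f μ ν₂ := by
  unfold AUCRisk
  have h1 : ∀ x : X, ∫ x', (if f x - f x' < 0 then (1:ℝ) else 0)
      ∂(ENNReal.ofReal a • ν₁ + ENNReal.ofReal b • ν₂)
      = a * ∫ x', (if f x - f x' < 0 then (1:ℝ) else 0) ∂ν₁
        + b * ∫ x', (if f x - f x' < 0 then (1:ℝ) else 0) ∂ν₂ := by
    intro x
    rw [integral_add_measure, integral_smul_measure, integral_smul_measure,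
      ENNReal.toReal_ofReal ha, ENNReal.toReal_ofReal hb]
    · rfl
    · exact (int_inner hf x ν₁).smul_measure ENNReal.ofReal_ne_top
    · exact (int_inner hf x ν₂).smul_measure ENNReal.ofReal_ne_top
  simp_rw [h1]
  rw [integral_add ((int_outer hf μ ν₁).const_mul a) ((int_outer hf μ ν₂).const_mul b),
    integral_const_mul, integral_const_mul]

private lemma AUC_left (hf : Measurable f) (μ₁ μ₂ ν : Measure X) [IsProbabilityMeasure μ₁]
    [IsProbabilityMeasure μ₂] [IsProbabilityMeasure ν] {a b : ℝ} (ha : 0 ≤ a) (hb : 0 ≤ b) :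
    AUCRisk f (ENNReal.ofReal a • μ₁ + ENNReal.ofReal b • μ₂) ν
      = a * AUCRisk f μ₁ ν + b * AUCRisk f μ₂ ν := by
  unfold AUCRisk
  rw [integral_add_measure, integral_smul_measure, integral_smul_measure,
    ENNReal.toReal_ofReal ha, ENNReal.toReal_ofReal hb]
  · rfl
  · exact (int_outer hf μ₁ ν).smul_measure ENNReal.ofReal_ne_top
  · exact (int_outer hf μ₂ ν).smul_measure ENNReal.ofReal_ne_top

private lemma AUC_sum (hf : Measurable f) (μ ν : Measure X) [IsProbabilityMeasure μ]
    [IsProbabilityMeasure ν] (hν : ∀ t : ℝ, ν {x | f x = t} = 0) :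
    AUCRisk f μ ν + AUCRisk f ν μ = 1 := by
  unfold AUCRisk
  have hswap : ∫ x, ∫ x', (if f x - f x' < 0 then (1:ℝ) else 0) ∂μ ∂ν
      = ∫ x, ∫ x', (if f x' - f x < 0 then (1:ℝ) else 0) ∂ν ∂μ := by
    apply integral_integral_swap
    refine (integrable_const (1:ℝ)).mono' (measG hf).aestronglyMeasurable ?_
    filter_upwards with p
    simp only [Function.uncurry]
    split <;> simp
  rw [hswap, ← integral_add (int_outer hf μ ν) ?_]
  · have : ∀ x : X, (∫ x', (if f x - f x' < 0 then (1:ℝ) else 0) ∂ν)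
        + (∫ x', (if f x' - f x < 0 then (1:ℝ) else 0) ∂ν) = 1 := by
      intro x
      rw [← integral_add (int_inner hf x ν) ?_]
      · have he : ∀ᵐ x' ∂ν, ((if f x - f x' < 0 then (1:ℝ) else 0)
            + (if f x' - f x < 0 then (1:ℝ) else 0)) = 1 := by
          have : ∀ᵐ x' ∂ν, f x' ≠ f x := by
            rw [ae_iff]
            simpa using hν (f x)
          filter_upwards [this] with x' hx'
          rcases lt_trichotomy (f x') (f x) with h | h | h
          · rw [if_neg (by linarith), if_pos (by linarith)]; ring
          · exact absurd h hx'
          · rw [if_pos (by linarith), if_neg (by linarith)]; ring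
        rw [integral_congr_ae he]
        simp
      · refine (integrable_const (1:ℝ)).mono' ?_ ?_
        · exact (Measurable.ite (measurableSet_lt (hf.sub measurable_const) measurable_const)
            measurable_const measurable_const).aestronglyMeasurable
        · filter_upwards with x'
          by_cases h : f x' - f x < 0 <;> simp [h]
    simp_rw [this]
    simp
  · refine (integrable_const (1:ℝ)).mono' ?_ ?_
    · have : Measurable (fun p : X × X => if f p.2 - f p.1 < 0 then (1:ℝ) else 0) :=
        Measurable.ite (measurableSet_lt ((hf.comp measurable_snd).sub (hf.comp measurable_fst))
          measurable_const) measurable_const measurable_const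
      exact this.stronglyMeasurable.integral_prod_right'.aestronglyMeasurable
    · filter_upwards with x
      rw [Real.norm_eq_abs, abs_of_nonneg (integral_nonneg fun x' => by positivity)]
      calc ∫ x', (if f x' - f x < 0 then (1:ℝ) else 0) ∂ν ≤ ∫ _x', (1:ℝ) ∂ν := by
            refine integral_mono ?_ (integrable_const 1) fun x' => ?_
            · refine (integrable_const (1:ℝ)).mono' ?_ ?_
              · exact (Measurable.ite (measurableSet_lt (hf.sub measurable_const)
                  measurable_const) measurable_const measurable_const).aestronglyMeasurable
              · filter_upwards with x'
                by_cases h : f x' - f x < 0 <;> simp [h]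
            · by_cases h : f x' - f x < 0 <;> simp [h]
        _ = 1 := by simp

private lemma AUC_self (hf : Measurable f) (μ : Measure X) [IsProbabilityMeasure μ]
    (hμ : ∀ t : ℝ, μ {x | f x = t} = 0) : AUCRisk f μ μ = 1 / 2 := by
  have := AUC_sum hf μ μ hμ
  linarith

end Aux

private lemma isProb_mix {X : Type*} [MeasurableSpace X] (μ ν : Measure X)
    [IsProbabilityMeasure μ] [IsProbabilityMeasure ν] {a b : ℝ} (ha : 0 ≤ a) (hb : 0 ≤ b)
    (hab : a + b = 1) : IsProbabilityMeasure (ENNReal.ofReal a • μ + ENNReal.ofReal b • ν) := by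
  constructor
  simp [Measure.add_apply, Measure.smul_apply, smul_eq_mul, measure_univ,
    ← ENNReal.ofReal_add ha hb, hab]

private lemma AUC_mix {X : Type*} [MeasurableSpace X] {f : X → ℝ} (hf : Measurable f)
    (μ₁ μ₂ ν₁ ν₂ : Measure X) [IsProbabilityMeasure μ₁] [IsProbabilityMeasure μ₂]
    [IsProbabilityMeasure ν₁] [IsProbabilityMeasure ν₂] {a b c d : ℝ}
    (ha : 0 ≤ a) (hb : 0 ≤ b) (hc : 0 ≤ c) (hd : 0 ≤ d) (hcd : c + d = 1) :
    AUCRisk f (ENNReal.ofReal a • μ₁ + ENNReal.ofReal b • μ₂)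
        (ENNReal.ofReal c • ν₁ + ENNReal.ofReal d • ν₂)
      = a * (c * AUCRisk f μ₁ ν₁ + d * AUCRisk f μ₁ ν₂)
        + b * (c * AUCRisk f μ₂ ν₁ + d * AUCRisk f μ₂ ν₂) := by
  haveI := isProb_mix ν₁ ν₂ hc hd hcd
  rw [AUC_left hf _ _ _ ha hb, AUC_right hf _ _ _ hc hd, AUC_right hf _ _ _ hc hd]

/-- consistency of the combined noisy semi-supervised risk:
`R_P̃ÑU(f) = γ·R(f; p_P̃, p_Ñ) + (1−γ)·(R(f; p_P̃, p_U) + R(f; p_U, p_Ñ) − 1/2)`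
equals `ã·R_PN(f) + (1 − ã)/2` with `ã = 1 − η_P − η_N`, independently of `γ`. -/
theorem combined_noisy_semi_supervised_auc_risk {X : Type*} [MeasurableSpace X]
    (pP pN : Measure X) [IsProbabilityMeasure pP] [IsProbabilityMeasure pN]
    (πP πN : ℝ) (hπP : πP ∈ Set.Icc (0 : ℝ) 1) (hπN : πN ∈ Set.Icc (0 : ℝ) 1)
    (hsum : πP + πN = 1)
    (ηP ηN : ℝ) (hηP : ηP ∈ Set.Icc (0 : ℝ) 1) (hηN : ηN ∈ Set.Icc (0 : ℝ) 1)
    (γ : ℝ) (hγ : γ ∈ Set.Icc (0 : ℝ) 1)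
    (f : X → ℝ) (hf : Measurable f)
    (hP : ∀ t : ℝ, pP {x | f x = t} = 0)
    (hN : ∀ t : ℝ, pN {x | f x = t} = 0)
    (pPt pNt pU : Measure X)
    (hpPt : pPt = ENNReal.ofReal (1 - ηP) • pP + ENNReal.ofReal ηP • pN)
    (hpNt : pNt = ENNReal.ofReal ηN • pP + ENNReal.ofReal (1 - ηN) • pN)
    (hpU : pU = ENNReal.ofReal πP • pP + ENNReal.ofReal πN • pN) :
    γ * AUCRisk f pPt pNt
      + (1 - γ) * (AUCRisk f pPt pU + AUCRisk f pU pNt - 1 / 2)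
      = (1 - ηP - ηN) * AUCRisk f pP pN + (1 - (1 - ηP - ηN)) / 2 := by
  have h1P : (0:ℝ) ≤ 1 - ηP := by linarith [hηP.2]
  have h1N : (0:ℝ) ≤ 1 - ηN := by linarith [hηN.2]
  subst hpPt hpNt hpU
  rw [AUC_mix hf pP pN pP pN h1P hηP.1 hηN.1 h1N (by ring),
    AUC_mix hf pP pN pP pN h1P hηP.1 hπP.1 hπN.1 hsum,
    AUC_mix hf pP pN pP pN hπP.1 hπN.1 hηN.1 h1N (by ring)]
  have hPP := AUC_self hf pP hP
  have hNN := AUC_self hf pN hN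
  have hNP : AUCRisk f pN pP = 1 - AUCRisk f pP pN := by
    have := AUC_sum hf pP pN hN
    linarith
  rw [hPP, hNN, hNP]
  have hπN2 : πN = 1 - πP := by linarith
  subst hπN2
  ring
end

section
/- (rpAUC risk equals the trimmed AUC risk; small-loss equivalence.) Let X_A and X_B be nonempty finite sets of points of X, let f : X → ℝ be injective on X_A and on X_B, and let ℓ : ℝ → ℝ be monotonically nonincreasing. Fix α, β ∈ [0,1), and let X_A^+ ⊆ X_A be the subset of the ⌊(1−β)·|X_A|⌋ elements of X_A with the largest values of f, and X_B^− ⊆ X_B the subset of the ⌊(1−α)·|X_B|⌋ elements of X_B with the smallest values of f. Define the instance loss L(x) = (1/|X_B|)·Σ_{x' ∈ X_B} ℓ(f(x) − f(x')) for x ∈ X_A and L(x') = (1/|X_A|)·Σ_{x ∈ X_A} ℓ(f(x) − f(x')) for x' ∈ X_B. Then X_A^+ minimizes the total instance loss Σ_{x ∈ S} L(x) among all subsets S ⊆ X_A of size ⌊(1−β)·|X_A|⌋, and X_B^− minimizes Σ_{x' ∈ S'} L(x') among all subsets S' ⊆ X_B of size ⌊(1−α)·|X_B|⌋; consequently, the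 empirical rpAUC risk R̂^(rp)(f; α, β) = (1/(|X_A^+|·|X_B^−|))·Σ_{x ∈ X_A^+} Σ_{x' ∈ X_B^−} ℓ(f(x) − f(x')) equals the full empirical pairwise AUC risk computed after removing from X_A a set of ⌈β·|X_A|⌉-many instances of maximal total instance loss and from X_B a set of ⌈α·|X_B|⌉-many instances of maximal total instance loss. -/
/-- Empirical pairwise AUC risk of score `f` with loss `ℓ` over the finite sets
`S` (positives) and `S'` (negatives). -/
noncomputable def pairAUCRisk {X : Type*} (ℓ : ℝ → ℝ) (f : X → ℝ)
    (S S' : Finset X) : ℝ :=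
  (1 / ((S.card : ℝ) * (S'.card : ℝ))) * ∑ x ∈ S, ∑ x' ∈ S', ℓ (f x - f x')

/-- Instance loss of `x ∈ X_A` against the full set `X_B`. -/
noncomputable def instanceLossA {X : Type*} (ℓ : ℝ → ℝ) (f : X → ℝ)
    (XB : Finset X) (x : X) : ℝ :=
  (1 / (XB.card : ℝ)) * ∑ x' ∈ XB, ℓ (f x - f x')

/-- Instance loss of `x' ∈ X_B` against the full set `X_A`. -/
noncomputable def instanceLossB {X : Type*} (ℓ : ℝ → ℝ) (f : X → ℝ)
    (XA : Finset X) (x' : X) : ℝ :=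
  (1 / (XA.card : ℝ)) * ∑ x ∈ XA, ℓ (f x - f x')


lemma sum_min_subset {X : Type*} [DecidableEq X] (A T S : Finset X) (hT : T ⊆ A) (hS : S ⊆ A)
    (hcard : S.card = T.card) (h : X → ℝ)
    (hmin : ∀ x ∈ T, ∀ y ∈ A \ T, h x ≤ h y) :
    ∑ x ∈ T, h x ≤ ∑ x ∈ S, h x := by
  have hc : (T \ S).card = (S \ T).card := by
    have h1 := Finset.card_sdiff_add_card_inter T S
    have h2 := Finset.card_sdiff_add_card_inter S T
    rw [Finset.inter_comm] at h2
    omega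
  have e : (T \ S : Finset X) ≃ (S \ T : Finset X) := Finset.equivOfCardEq hc
  have key : ∑ x ∈ T \ S, h x ≤ ∑ x ∈ S \ T, h x := by
    calc ∑ x ∈ T \ S, h x = ∑ i : (T \ S : Finset X), h i := (Finset.sum_coe_sort _ _).symm
      _ ≤ ∑ i : (T \ S : Finset X), h (e i) := by
          apply Finset.sum_le_sum
          intro i _
          have hi : (i : X) ∈ T := (Finset.mem_sdiff.mp i.2).1
          have hei : ((e i : X)) ∈ A \ T := by
            have h2 := (e i).2
            rw [Finset.mem_sdiff] at h2 ⊢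
            exact ⟨hS h2.1, h2.2⟩
          exact hmin i hi _ hei
      _ = ∑ j : (S \ T : Finset X), h j := Fintype.sum_equiv e _ _ (fun i => rfl)
      _ = ∑ x ∈ S \ T, h x := Finset.sum_coe_sort _ _
  calc ∑ x ∈ T, h x = ∑ x ∈ T ∩ S, h x + ∑ x ∈ T \ S, h x :=
        (Finset.sum_inter_add_sum_sdiff T S h).symm
    _ ≤ ∑ x ∈ T ∩ S, h x + ∑ x ∈ S \ T, h x := by linarith
    _ = ∑ x ∈ S, h x := by rw [Finset.inter_comm]; exact Finset.sum_inter_add_sum_sdiff S T h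

lemma floor_one_sub_mul (n : ℕ) (r : ℝ) (h0 : 0 ≤ r) (h1 : r < 1) :
    ⌈r * n⌉₊ ≤ n ∧ ⌊(1 - r) * n⌋₊ = n - ⌈r * n⌉₊ := by
  have hrn : r * n ≤ n := by nlinarith [Nat.cast_nonneg (α := ℝ) n]
  have hceil : ⌈r * n⌉₊ ≤ n := Nat.ceil_le.mpr hrn
  refine ⟨hceil, ?_⟩
  rw [Nat.floor_eq_iff (by nlinarith [Nat.cast_nonneg (α := ℝ) n])]
  push_cast [Nat.cast_sub hceil]
  constructor
  · nlinarith [Nat.le_ceil (r * n)]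
  · nlinarith [Nat.ceil_lt_add_one (by positivity : (0:ℝ) ≤ r * n)]

/-- rpAUC risk equals the trimmed AUC risk; small-loss equivalence:
the top-score subset `X_A⁺` (of size `⌊(1−β)|X_A|⌋`) minimizes the total instance loss
among subsets of `X_A` of that size, the bottom-score subset `X_B⁻` (of size
`⌊(1−α)|X_B|⌋`) minimizes the total instance loss among subsets of `X_B` of that size,
and the empirical rpAUC risk computed on `(X_A⁺, X_B⁻)` equals the full empirical
pairwise AUC risk computed after removing from `X_A` a set of `⌈β|X_A|⌉`-many instances
of maximal total instance loss and from `X_B` a set of `⌈α|X_B|⌉`-many instances of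
maximal total instance loss. -/
theorem rpauc_eq_trimmed_auc {X : Type*} [DecidableEq X]
    (XA XB : Finset X) (hA : XA.Nonempty) (hB : XB.Nonempty)
    (f : X → ℝ) (hfA : Set.InjOn f ↑XA) (hfB : Set.InjOn f ↑XB)
    (ℓ : ℝ → ℝ) (hℓ : Antitone ℓ)
    (α β : ℝ) (hα : α ∈ Set.Ico (0 : ℝ) 1) (hβ : β ∈ Set.Ico (0 : ℝ) 1)
    -- `X_A⁺` : the `⌊(1−β)·|X_A|⌋` top-scored elements of `X_A`
    (XAp : Finset X) (hXAp_sub : XAp ⊆ XA)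
    (hXAp_card : XAp.card = ⌊(1 - β) * (XA.card : ℝ)⌋₊)
    (hXAp_top : ∀ x ∈ XAp, ∀ y ∈ XA \ XAp, f y ≤ f x)
    -- `X_B⁻` : the `⌊(1−α)·|X_B|⌋` bottom-scored elements of `X_B`
    (XBm : Finset X) (hXBm_sub : XBm ⊆ XB)
    (hXBm_card : XBm.card = ⌊(1 - α) * (XB.card : ℝ)⌋₊)
    (hXBm_bot : ∀ x ∈ XBm, ∀ y ∈ XB \ XBm, f x ≤ f y) :
    -- (1) `X_A⁺` minimizes the total instance loss among same-size subsets of `X_A`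
    (∀ S ⊆ XA, S.card = ⌊(1 - β) * (XA.card : ℝ)⌋₊ →
        ∑ x ∈ XAp, instanceLossA ℓ f XB x ≤ ∑ x ∈ S, instanceLossA ℓ f XB x) ∧
    -- (2) `X_B⁻` minimizes the total instance loss among same-size subsets of `X_B`
    (∀ S' ⊆ XB, S'.card = ⌊(1 - α) * (XB.card : ℝ)⌋₊ →
        ∑ x' ∈ XBm, instanceLossB ℓ f XA x' ≤ ∑ x' ∈ S', instanceLossB ℓ f XA x') ∧
    -- (3) the rpAUC risk equals the pairwise AUC risk after removing a set of
    -- `⌈β|X_A|⌉` instances of maximal total instance loss from `X_A` and a set of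
    -- `⌈α|X_B|⌉` instances of maximal total instance loss from `X_B`
    (∃ DA ⊆ XA, ∃ DB ⊆ XB,
        DA.card = ⌈β * (XA.card : ℝ)⌉₊ ∧
        (∀ D ⊆ XA, D.card = ⌈β * (XA.card : ℝ)⌉₊ →
          ∑ x ∈ D, instanceLossA ℓ f XB x ≤ ∑ x ∈ DA, instanceLossA ℓ f XB x) ∧
        DB.card = ⌈α * (XB.card : ℝ)⌉₊ ∧
        (∀ D' ⊆ XB, D'.card = ⌈α * (XB.card : ℝ)⌉₊ →
          ∑ x' ∈ D', instanceLossB ℓ f XA x' ≤ ∑ x' ∈ DB, instanceLossB ℓ f XA x') ∧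
        pairAUCRisk ℓ f XAp XBm = pairAUCRisk ℓ f (XA \ DA) (XB \ DB)) := by
  have hminA : ∀ x ∈ XAp, ∀ y ∈ XA \ XAp,
      instanceLossA ℓ f XB x ≤ instanceLossA ℓ f XB y := by
    intro x hx y hy
    unfold instanceLossA
    apply mul_le_mul_of_nonneg_left _ (by positivity)
    apply Finset.sum_le_sum
    intro z _
    exact hℓ (sub_le_sub_right (hXAp_top x hx y hy) _)
  have hminB : ∀ x ∈ XBm, ∀ y ∈ XB \ XBm,
      instanceLossB ℓ f XA x ≤ instanceLossB ℓ f XA y := by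
    intro x hx y hy
    unfold instanceLossB
    apply mul_le_mul_of_nonneg_left _ (by positivity)
    apply Finset.sum_le_sum
    intro z _
    exact hℓ (sub_le_sub_left (hXBm_bot x hx y hy) _)
  have part1 : ∀ S ⊆ XA, S.card = ⌊(1 - β) * (XA.card : ℝ)⌋₊ →
      ∑ x ∈ XAp, instanceLossA ℓ f XB x ≤ ∑ x ∈ S, instanceLossA ℓ f XB x := by
    intro S hS hScard
    exact sum_min_subset XA XAp S hXAp_sub hS (hScard.trans hXAp_card.symm) _ hminA
  have part2 : ∀ S' ⊆ XB, S'.card = ⌊(1 - α) * (XB.card : ℝ)⌋₊ →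
      ∑ x' ∈ XBm, instanceLossB ℓ f XA x' ≤ ∑ x' ∈ S', instanceLossB ℓ f XA x' := by
    intro S hS hScard
    exact sum_min_subset XB XBm S hXBm_sub hS (hScard.trans hXBm_card.symm) _ hminB
  refine ⟨part1, part2, XA \ XAp, Finset.sdiff_subset, XB \ XBm, Finset.sdiff_subset, ?_, ?_, ?_, ?_, ?_⟩
  · obtain ⟨hc, hf⟩ := floor_one_sub_mul XA.card β hβ.1 hβ.2
    rw [Finset.card_sdiff_of_subset hXAp_sub, hXAp_card, hf]
    omega
  · intro D hD hDcard
    obtain ⟨hc, hf⟩ := floor_one_sub_mul XA.card β hβ.1 hβ.2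
    have h1 := Finset.sum_sdiff (f := instanceLossA ℓ f XB) hD
    have h2 := Finset.sum_sdiff (f := instanceLossA ℓ f XB) hXAp_sub
    have h3 : (XA \ D).card = ⌊(1 - β) * (XA.card : ℝ)⌋₊ := by
      rw [Finset.card_sdiff_of_subset hD, hDcard, hf]
    have := part1 (XA \ D) Finset.sdiff_subset h3
    linarith
  · obtain ⟨hc, hf⟩ := floor_one_sub_mul XB.card α hα.1 hα.2
    rw [Finset.card_sdiff_of_subset hXBm_sub, hXBm_card, hf]
    omega
  · intro D hD hDcard
    obtain ⟨hc, hf⟩ := floor_one_sub_mul XB.card α hα.1 hα.2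
    have h1 := Finset.sum_sdiff (f := instanceLossB ℓ f XA) hD
    have h2 := Finset.sum_sdiff (f := instanceLossB ℓ f XA) hXBm_sub
    have h3 : (XB \ D).card = ⌊(1 - α) * (XB.card : ℝ)⌋₊ := by
      rw [Finset.card_sdiff_of_subset hD, hDcard, hf]
    have := part2 (XB \ D) Finset.sdiff_subset h3
    linarith
  · rw [Finset.sdiff_sdiff_eq_self hXAp_sub, Finset.sdiff_sdiff_eq_self hXBm_sub]
end
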